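/- Every Farey triple can be obtained from the Farey triple {1, 0, ∞} by a finite sequence of mutations. -/

import Mathlib

/-- `ℚ∞ = ℚ ∪ {∞}`, ordered with `∞ = ⊤` as the greatest element. -/
abbrev QInf : Type := WithTop ℚ

/-- The numerator `d(q)` of the reduced representation `q = d(q)/r(q)`; `d(∞) = 1`. -/
def fnum : QInf → ℤ := WithTop.recTopCoe 1 (fun q => q.num)

/-- The denominator `r(q)` of the reduced representation `q = d(q)/r(q)`; `r(∞) = 0`. -/
def fden : QInf → ℤ := WithTop.recTopCoe 0 (fun q => (q.den : ℤ))

/-- The element of `ℚ∞` represented by the fraction `a / b`: it is `∞` if `b = 0`,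
and otherwise the rational number `a / b` (normalized so that the denominator is
positive and the fraction is in lowest terms). -/
def fmk (a b : ℤ) : QInf := if b = 0 then (⊤ : QInf) else (((a : ℚ) / (b : ℚ)) : ℚ)

/-- The Farey distance `Δ(p,q) = |d(p)r(q) - d(q)r(p)|`. -/
def fdist (p q : QInf) : ℤ := |fnum p * fden q - fnum q * fden p|

/-- `p` and `q` are Farey neighbours if `Δ(p,q) = 1`. -/
def FareyNbr (p q : QInf) : Prop := fdist p q = 1

/-- The Farey sum `p ⊕ q = (d(p) + d(q)) / (r(p) + r(q))`. -/
def fsum (p q : QInf) : QInf := fmk (fnum p + fnum q) (fden p + fden q)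

/-- The Farey difference `p ⊖ q = (d(p) - d(q)) / (r(p) - r(q))`. -/
def fdiff (p q : QInf) : QInf := fmk (fnum p - fnum q) (fden p - fden q)

/-- A Farey triple: a three-element subset of `ℚ∞` whose elements are pairwise
Farey neighbours. -/
def IsFareyTriple (s : Set QInf) : Prop := s.ncard = 3 ∧ s.Pairwise FareyNbr

/-- The element replacing `p` in the mutation of the Farey triple `{p, q, r}` in
direction `p`: it is `q ⊖ r` if `p` lies strictly between `q` and `r`, and `q ⊕ r`
otherwise. -/
def fareyMutEl (p q r : QInf) : QInf :=
  if (q < p ∧ p < r) ∨ (r < p ∧ p < q) then fdiff q r else fsum q r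

/-- The mutation of the Farey triple `{p, q, r}` in direction `p`. -/
def fareyMut (p q r : QInf) : Set QInf := {fareyMutEl p q r, q, r}

/-- The complexity `c(q) = |d(q)| + r(q) + |d(q) - r(q)|`. -/
def complexity (x : QInf) : ℤ := |fnum x| + fden x + |fnum x - fden x|

/-- `t` is obtained from `s` by a single mutation of Farey triples. -/
def MutStep (s t : Set QInf) : Prop :=
  ∃ p q r : QInf, p ≠ q ∧ p ≠ r ∧ q ≠ r ∧ s = {p, q, r} ∧ t = fareyMut p q r





@[simp] lemma fnum_top : fnum ⊤ = 1 := rfl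
@[simp] lemma fden_top : fden ⊤ = 0 := rfl
@[simp] lemma fnum_coe (q : ℚ) : fnum (q : QInf) = q.num := rfl
@[simp] lemma fden_coe (q : ℚ) : fden (q : QInf) = (q.den : ℤ) := rfl

lemma fden_nonneg (x : QInf) : 0 ≤ fden x := by
  cases x using WithTop.recTopCoe with
  | top => simp
  | coe q => simp

lemma fden_pos_of_ne_top (x : QInf) (h : x ≠ ⊤) : 0 < fden x := by
  cases x using WithTop.recTopCoe with
  | top => simp at h
  | coe q => simpa using q.pos

lemma fden_eq_zero (x : QInf) (h : fden x = 0) : x = ⊤ := by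
  cases x using WithTop.recTopCoe with
  | top => rfl
  | coe q => simp [q.den_nz] at h

lemma fgcd (x : QInf) : Int.gcd (fnum x) (fden x) = 1 := by
  cases x using WithTop.recTopCoe with
  | top => simp
  | coe q => simpa [Int.gcd] using q.reduced

lemma fext (x y : QInf) (h1 : fnum x = fnum y) (h2 : fden x = fden y) : x = y := by
  cases x using WithTop.recTopCoe with
  | top =>
    cases y using WithTop.recTopCoe with
    | top => rfl
    | coe q => exfalso; have : (q.den:ℤ) ≠ 0 := Int.natCast_ne_zero.mpr q.den_nz; exact this h2.symm
  | coe p =>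
    cases y using WithTop.recTopCoe with
    | top => exfalso; have : (p.den:ℤ) ≠ 0 := Int.natCast_ne_zero.mpr p.den_nz; exact this h2
    | coe q =>
      simp at h1 h2
      exact congrArg _ (Rat.ext h1 (Nat.cast_injective h2))

lemma fmk_self (x : QInf) : fmk (fnum x) (fden x) = x := by
  cases x using WithTop.recTopCoe with
  | top => simp [fmk]
  | coe q => simp [fmk, q.den_nz, Rat.num_div_den]

lemma fmk_neg (a b : ℤ) : fmk (-a) (-b) = fmk a b := by
  unfold fmk
  rcases eq_or_ne b 0 with hb | hb
  · simp [hb]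
  · rw [if_neg (by omega), if_neg hb]
    push_cast
    rw [neg_div_neg_eq]

lemma fmk_pos_num_den (a b : ℤ) (hb : 0 < b) (hg : Int.gcd a b = 1) :
    fnum (fmk a b) = a ∧ fden (fmk a b) = b := by
  have hbn : b = (b.toNat : ℤ) := by omega
  have hd : b.toNat ≠ 0 := by omega
  have hcop : a.natAbs.Coprime b.toNat := by
    have h2 : b.natAbs = b.toNat := by omega
    unfold Nat.Coprime
    simp only [Int.gcd] at hg
    rw [← h2]
    exact hg
  set q : ℚ := Rat.mk' a b.toNat hd hcop with hq
  have hmk : fmk a b = (q : QInf) := by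
    unfold fmk
    rw [if_neg (by omega)]
    congr 1
    rw [hq, Rat.mk_eq_divInt, Rat.divInt_eq_div]
    congr 1
    exact_mod_cast hbn
  rw [hmk]
  constructor
  · simp [hq]
  · simp [hq, ← hbn]

/-- Master representation lemma for `fmk`. -/
lemma fmk_rep (a b : ℤ) (hg : Int.gcd a b = 1) :
    ∃ s : ℤ, (s = 1 ∨ s = -1) ∧ fnum (fmk a b) = s * a ∧ fden (fmk a b) = s * b := by
  rcases lt_trichotomy b 0 with hb | hb | hb
  · refine ⟨-1, Or.inr rfl, ?_⟩
    rw [← fmk_neg a b]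
    have := fmk_pos_num_den (-a) (-b) (by omega) (by simpa [Int.gcd] using hg)
    constructor <;> omega
  · subst hb
    have ha : a = 1 ∨ a = -1 := by
      have := hg; simp [Int.gcd] at this; omega
    refine ⟨a, ha, ?_, ?_⟩
    · show fnum ⊤ = a * a
      rcases ha with h | h <;> simp [h]
    · show fden ⊤ = a * 0
      simp
  · have := fmk_pos_num_den a b hb hg
    exact ⟨1, Or.inl rfl, by omega, by omega⟩

/-- Cross-product characterization of the order. -/
lemma flt_iff (x y : QInf) : x < y ↔ fnum x * fden y < fnum y * fden x := by
  cases x using WithTop.recTopCoe with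
  | top =>
    cases y using WithTop.recTopCoe with
    | top => simp
    | coe q =>
      simp only [fnum_top, fden_top, fnum_coe, fden_coe, one_mul, mul_zero]
      constructor
      · intro h; exact absurd h not_top_lt
      · intro h; have := q.pos; omega
  | coe p =>
    cases y using WithTop.recTopCoe with
    | top =>
      simp only [fnum_top, fden_top, fnum_coe, fden_coe, mul_zero, one_mul]
      constructor
      · intro _; exact_mod_cast p.pos
      · intro _; exact WithTop.coe_lt_top p
    | coe q =>
      rw [WithTop.coe_lt_coe]
      exact Rat.lt_iff _ _


lemma fareyNbr_comm {p q : QInf} (h : FareyNbr p q) : FareyNbr q p := by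
  unfold FareyNbr fdist at *
  rw [abs_sub_comm] at h
  exact h

/-- Structure of a Farey triple: `p` is the sum or a difference of `q` and `r`. -/
lemma tricho (p q r : QInf) (hqr : q ≠ r)
    (h1 : FareyNbr p q) (h2 : FareyNbr p r) (h3 : FareyNbr q r) :
    (fnum p = fnum q + fnum r ∧ fden p = fden q + fden r) ∨
    (fnum p = fnum q - fnum r ∧ fden p = fden q - fden r) ∨
    (fnum p = fnum r - fnum q ∧ fden p = fden r - fden q) := by
  set a := fnum p with ha'; set b := fden p with hb'
  set c := fnum q with hc'; set d := fden q with hd'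
  set e := fnum r with he'; set f := fden r with hf'
  unfold FareyNbr fdist at h1 h2 h3
  have hD : c * f - e * d = 1 ∨ c * f - e * d = -1 := by
    rcases (abs_eq (by norm_num : (0:ℤ) ≤ 1)).mp h3 with h | h <;> [left; right] <;> linarith
  have hD2 : (c * f - e * d) * (c * f - e * d) = 1 := by
    rcases hD with h | h <;> rw [h] <;> ring
  set m := (c * f - e * d) * (a * f - e * b) with hm'
  set n := (c * f - e * d) * (c * b - a * d) with hn'
  have ham : a = m * c + n * e := by
    rw [hm', hn']; linear_combination (-a) * hD2
  have hbm : b = m * d + n * f := by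
    rw [hm', hn']; linear_combination (-b) * hD2
  have habsD : |c * f - e * d| = 1 := h3
  have hm1 : m = 1 ∨ m = -1 := by
    have h : |m| = 1 := by rw [hm', abs_mul, habsD, h2, one_mul]
    exact (abs_eq (by norm_num : (0:ℤ) ≤ 1)).mp h
  have hn1 : n = 1 ∨ n = -1 := by
    have h1' : |c * b - a * d| = 1 := by rw [abs_sub_comm]; exact h1
    have h : |n| = 1 := by rw [hn', abs_mul, habsD, h1', one_mul]
    exact (abs_eq (by norm_num : (0:ℤ) ≤ 1)).mp h
  have hbq : 0 ≤ b := hb' ▸ fden_nonneg p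
  have hdq : 0 ≤ d := hd' ▸ fden_nonneg q
  have hfq : 0 ≤ f := hf' ▸ fden_nonneg r
  rcases hm1 with hm1 | hm1 <;> rcases hn1 with hn1 | hn1 <;>
    rw [hm1, hn1] at ham hbm
  · left; constructor <;> linarith
  · right; left; constructor <;> linarith
  · right; right; constructor <;> linarith
  · -- impossible: b = -d - f with all nonneg, forces q = r = ⊤
    exfalso
    have hd0 : d = 0 := by linarith
    have hf0 : f = 0 := by linarith
    have := fden_eq_zero q (by omega)
    have := fden_eq_zero r (by omega)
    exact hqr (by simp [*])

lemma tricho_el (p q r : QInf) (hqr : q ≠ r)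
    (h1 : FareyNbr p q) (h2 : FareyNbr p r) (h3 : FareyNbr q r) :
    p = fsum q r ∨ p = fdiff q r ∨ p = fdiff r q := by
  rcases tricho p q r hqr h1 h2 h3 with ⟨h, h'⟩ | ⟨h, h'⟩ | ⟨h, h'⟩
  · left; rw [← fmk_self p, h, h']; rfl
  · right; left; rw [← fmk_self p, h, h']; rfl
  · right; right; rw [← fmk_self p, h, h']; rfl

lemma cross_ne_zero {q r : QInf} (h3 : FareyNbr q r) :
    fnum q * fden r - fnum r * fden q ≠ 0 := by
  unfold FareyNbr fdist at h3
  intro h; rw [h] at h3; simp at h3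

lemma sum_den_pos (q r : QInf) (hqr : q ≠ r) : 0 < fden q + fden r := by
  have h1 := fden_nonneg q; have h2 := fden_nonneg r
  rcases (by omega : 0 < fden q + fden r ∨ (fden q = 0 ∧ fden r = 0)) with h | ⟨h, h'⟩
  · exact h
  · exact absurd ((fden_eq_zero q h).trans (fden_eq_zero r h').symm) hqr

lemma fsum_rep (q r : QInf) (hqr : q ≠ r) (h3 : FareyNbr q r) :
    fnum (fsum q r) = fnum q + fnum r ∧ fden (fsum q r) = fden q + fden r := by
  have hD : fnum q * fden r - fnum r * fden q = 1 ∨ fnum q * fden r - fnum r * fden q = -1 :=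
    (abs_eq (by norm_num : (0:ℤ) ≤ 1)).mp h3
  have hg : Int.gcd (fnum q + fnum r) (fden q + fden r) = 1 := by
    rw [← Int.isCoprime_iff_gcd_eq_one]
    rcases hD with h | h
    · exact ⟨fden r, -fnum r, by linear_combination h⟩
    · exact ⟨-fden r, fnum r, by linear_combination -h⟩
  exact fmk_pos_num_den _ _ (sum_den_pos q r hqr) hg

lemma fdiff_rep (q r : QInf) (h3 : FareyNbr q r) :
    ∃ s : ℤ, (s = 1 ∨ s = -1) ∧ fnum (fdiff q r) = s * (fnum q - fnum r) ∧
      fden (fdiff q r) = s * (fden q - fden r) := by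
  have hD : fnum q * fden r - fnum r * fden q = 1 ∨ fnum q * fden r - fnum r * fden q = -1 :=
    (abs_eq (by norm_num : (0:ℤ) ≤ 1)).mp h3
  have hg : Int.gcd (fnum q - fnum r) (fden q - fden r) = 1 := by
    rw [← Int.isCoprime_iff_gcd_eq_one]
    rcases hD with h | h
    · exact ⟨fden r, -fnum r, by linear_combination h⟩
    · exact ⟨-fden r, fnum r, by linear_combination -h⟩
  exact fmk_rep _ _ hg

lemma fdiff_comm (q r : QInf) : fdiff q r = fdiff r q := by
  unfold fdiff
  rw [show fnum q - fnum r = -(fnum r - fnum q) by ring,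
      show fden q - fden r = -(fden r - fden q) by ring, fmk_neg]

lemma btw_fsum (q r : QInf) (hqr : q ≠ r) (h3 : FareyNbr q r) :
    (q < fsum q r ∧ fsum q r < r) ∨ (r < fsum q r ∧ fsum q r < q) := by
  obtain ⟨hn, hd⟩ := fsum_rep q r hqr h3
  have hD : fnum q * fden r - fnum r * fden q = 1 ∨ fnum q * fden r - fnum r * fden q = -1 :=
    (abs_eq (by norm_num : (0:ℤ) ≤ 1)).mp h3
  rcases hD with h | h
  · right
    constructor <;> rw [flt_iff] <;> rw [hn, hd] <;> nlinarith
  · left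
    constructor <;> rw [flt_iff] <;> rw [hn, hd] <;> nlinarith

lemma not_btw_fdiff (q r : QInf) (h3 : FareyNbr q r) :
    ¬((q < fdiff q r ∧ fdiff q r < r) ∨ (r < fdiff q r ∧ fdiff q r < q)) := by
  obtain ⟨s, hs, hn, hd⟩ := fdiff_rep q r h3
  have hD : fnum q * fden r - fnum r * fden q = 1 ∨ fnum q * fden r - fnum r * fden q = -1 :=
    (abs_eq (by norm_num : (0:ℤ) ≤ 1)).mp h3
  rintro (⟨hl, hr⟩ | ⟨hl, hr⟩) <;> rw [flt_iff] at hl hr <;> rw [hn, hd] at hl hr <;>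
    rcases hs with hs | hs <;> rcases hD with h | h <;> rw [hs] at hl hr <;> nlinarith

lemma fsum_ne_left (q r : QInf) (hqr : q ≠ r) (h3 : FareyNbr q r) : fsum q r ≠ q := by
  obtain ⟨hn, hd⟩ := fsum_rep q r hqr h3
  intro h
  apply cross_ne_zero h3
  have : fnum (fsum q r) * fden q - fnum q * fden (fsum q r) = 0 := by rw [h]; ring
  rw [hn, hd] at this; linarith

lemma fsum_ne_right (q r : QInf) (hqr : q ≠ r) (h3 : FareyNbr q r) : fsum q r ≠ r := by
  obtain ⟨hn, hd⟩ := fsum_rep q r hqr h3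
  intro h
  apply cross_ne_zero h3
  have : fnum (fsum q r) * fden r - fnum r * fden (fsum q r) = 0 := by rw [h]; ring
  rw [hn, hd] at this; linarith

lemma fdiff_ne_left (q r : QInf) (h3 : FareyNbr q r) : fdiff q r ≠ q := by
  obtain ⟨s, hs, hn, hd⟩ := fdiff_rep q r h3
  intro h
  apply cross_ne_zero h3
  have : fnum (fdiff q r) * fden q - fnum q * fden (fdiff q r) = 0 := by rw [h]; ring
  rw [hn, hd] at this
  rcases hs with hs | hs <;> rw [hs] at this <;> linarith

lemma fdiff_ne_right (q r : QInf) (h3 : FareyNbr q r) : fdiff q r ≠ r := by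
  obtain ⟨s, hs, hn, hd⟩ := fdiff_rep q r h3
  intro h
  apply cross_ne_zero h3
  have : fnum (fdiff q r) * fden r - fnum r * fden (fdiff q r) = 0 := by rw [h]; ring
  rw [hn, hd] at this
  rcases hs with hs | hs <;> rw [hs] at this <;> linarith

lemma nbr_fsum_left (q r : QInf) (hqr : q ≠ r) (h3 : FareyNbr q r) : FareyNbr (fsum q r) q := by
  obtain ⟨hn, hd⟩ := fsum_rep q r hqr h3
  unfold FareyNbr fdist
  rw [hn, hd,
    show (fnum q + fnum r) * fden q - fnum q * (fden q + fden r) =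
      -(fnum q * fden r - fnum r * fden q) by ring, abs_neg]
  exact h3

lemma nbr_fsum_right (q r : QInf) (hqr : q ≠ r) (h3 : FareyNbr q r) : FareyNbr (fsum q r) r := by
  obtain ⟨hn, hd⟩ := fsum_rep q r hqr h3
  unfold FareyNbr fdist
  rw [hn, hd,
    show (fnum q + fnum r) * fden r - fnum r * (fden q + fden r) =
      fnum q * fden r - fnum r * fden q by ring]
  exact h3

lemma nbr_fdiff_left (q r : QInf) (h3 : FareyNbr q r) : FareyNbr (fdiff q r) q := by
  obtain ⟨s, hs, hn, hd⟩ := fdiff_rep q r h3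
  unfold FareyNbr fdist
  rw [hn, hd,
    show s * (fnum q - fnum r) * fden q - fnum q * (s * (fden q - fden r)) =
      s * (fnum q * fden r - fnum r * fden q) by ring, abs_mul]
  have : |s| = 1 := by rcases hs with hs | hs <;> rw [hs] <;> norm_num
  rw [this, one_mul]
  exact h3

lemma nbr_fdiff_right (q r : QInf) (h3 : FareyNbr q r) : FareyNbr (fdiff q r) r := by
  obtain ⟨s, hs, hn, hd⟩ := fdiff_rep q r h3
  unfold FareyNbr fdist
  rw [hn, hd,
    show s * (fnum q - fnum r) * fden r - fnum r * (s * (fden q - fden r)) =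
      s * (fnum q * fden r - fnum r * fden q) by ring, abs_mul]
  have : |s| = 1 := by rcases hs with hs | hs <;> rw [hs] <;> norm_num
  rw [this, one_mul]
  exact h3

lemma fsum_ne_fdiff (q r : QInf) (hqr : q ≠ r) (h3 : FareyNbr q r) : fsum q r ≠ fdiff q r := by
  intro h
  exact not_btw_fdiff q r h3 (h ▸ btw_fsum q r hqr h3)


lemma mutEl_fsum (q r : QInf) (hqr : q ≠ r) (h3 : FareyNbr q r) :
    fareyMutEl (fsum q r) q r = fdiff q r := by
  unfold fareyMutEl
  rw [if_pos (btw_fsum q r hqr h3)]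

lemma mutEl_fdiff (q r : QInf) (h3 : FareyNbr q r) :
    fareyMutEl (fdiff q r) q r = fsum q r := by
  unfold fareyMutEl
  rw [if_neg (not_btw_fdiff q r h3)]

/-- In a Farey triple, mutation swaps `fsum q r` and `fdiff q r`. -/
lemma mutEl_cases (p q r : QInf) (hqr : q ≠ r)
    (h1 : FareyNbr p q) (h2 : FareyNbr p r) (h3 : FareyNbr q r) :
    (p = fsum q r ∧ fareyMutEl p q r = fdiff q r) ∨
    (p = fdiff q r ∧ fareyMutEl p q r = fsum q r) := by
  rcases tricho_el p q r hqr h1 h2 h3 with h | h | h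
  · exact Or.inl ⟨h, h ▸ mutEl_fsum q r hqr h3⟩
  · exact Or.inr ⟨h, h ▸ mutEl_fdiff q r h3⟩
  · rw [← fdiff_comm q r] at h
    exact Or.inr ⟨h, h ▸ mutEl_fdiff q r h3⟩

lemma mutEl_invol (p q r : QInf) (hqr : q ≠ r)
    (h1 : FareyNbr p q) (h2 : FareyNbr p r) (h3 : FareyNbr q r) :
    fareyMutEl (fareyMutEl p q r) q r = p := by
  rcases mutEl_cases p q r hqr h1 h2 h3 with ⟨hp, hm⟩ | ⟨hp, hm⟩
  · rw [hm, mutEl_fdiff q r h3, ← hp]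
  · rw [hm, mutEl_fsum q r hqr h3, ← hp]

/-- Hexagonal norm on integer pairs. -/
def hexm (a b : ℤ) : ℤ := max (max |a| |b|) |a - b|

lemma hexm_neg (a b : ℤ) : hexm (-a) (-b) = hexm a b := by
  unfold hexm
  rw [abs_neg, abs_neg, show -a - -b = -(a - b) by ring, abs_neg]

lemma complexity_eq (x : QInf) : complexity x = 2 * hexm (fnum x) (fden x) := by
  unfold complexity hexm
  have hb := fden_nonneg x
  rcases abs_cases (fnum x) with ⟨h1, h1'⟩ | ⟨h1, h1'⟩ <;>
    rcases abs_cases (fden x) with ⟨h3, h3'⟩ | ⟨h3, h3'⟩ <;>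
    rcases abs_cases (fnum x - fden x) with ⟨h2, h2'⟩ | ⟨h2, h2'⟩ <;>
    rcases max_cases |fnum x| |fden x| with ⟨g, g'⟩ | ⟨g, g'⟩ <;>
    rcases max_cases (max |fnum x| |fden x|) |fnum x - fden x| with ⟨k, k'⟩ | ⟨k, k'⟩ <;>
    rw [k] <;> linarith

lemma no_unit_multiple {n t e : ℤ} (hn : 2 ≤ n) (he : e = 1 ∨ e = -1) (h : n * t = e) :
    False := by
  have hd : n ∣ |e| := dvd_abs n e |>.mpr ⟨t, h.symm⟩
  have : n ≤ |e| := Int.le_of_dvd (by rcases he with h' | h' <;> rw [h'] <;> norm_num) hd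
  rcases he with h' | h' <;> rw [h'] at this <;> simp at this <;> omega

lemma core_coord {n e y1 y2 x2 : ℤ} (hn : 2 ≤ n) (he : e = 1 ∨ e = -1)
    (hy1l : -n ≤ y1) (hy1u : y1 ≤ 0) (hy2l : -n ≤ y2) (hy2u : y2 ≤ n)
    (hx2l : -n < x2) (hx2u : x2 < 0)
    (hw : n * y2 - x2 * y1 = e) : |y1 + 2 * y2| < n := by
  have heb : -1 ≤ e ∧ e ≤ 1 := by rcases he with h | h <;> omega
  rw [abs_lt]
  by_contra hcon
  push_neg at hcon
  rcases (by omega : y1 + 2 * y2 ≤ -n ∨ n ≤ y1 + 2 * y2) with hc | hc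
  · -- lower subcase
    have hx2y1 : 0 ≤ x2 * y1 := by nlinarith [mul_nonneg (by omega : (0:ℤ) ≤ -x2) (by omega : (0:ℤ) ≤ -y1)]
    have hA : n * (n + y1) ≤ 2 := by
      nlinarith [mul_nonneg (by omega : (0:ℤ) ≤ n) (by omega : (0:ℤ) ≤ -y1 - 2 * y2 - n)]
    have h0 : 0 ≤ n + y1 := by omega
    rcases (by omega : n + y1 = 0 ∨ 1 ≤ n + y1) with h' | h'
    · -- y1 = -n
      have hy1 : y1 = -n := by omega
      rw [hy1] at hw
      exact no_unit_multiple hn he (show n * (y2 + x2) = e by linear_combination hw)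
    · have hn2 : n ≤ 2 := by nlinarith
      have hne : n = 2 := by omega
      rw [hne] at hA
      have hy1e : y1 = -1 := by omega
      have hx2e : x2 = -1 := by omega
      rw [hne, hy1e, hx2e] at hw
      norm_num at hw
      omega
  · -- upper subcase
    nlinarith [mul_nonneg (by omega : (0:ℤ) ≤ n - 1 + x2) (by omega : (0:ℤ) ≤ -y1),
      mul_nonneg (by omega : (0:ℤ) ≤ n + y1) (by omega : (0:ℤ) ≤ n - 2),
      mul_nonneg (by omega : (0:ℤ) ≤ n) (by omega : (0:ℤ) ≤ y1 + 2 * y2 - n)]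

lemma core {n e y1 z1 x2 y2 z2 : ℤ} (hn : 2 ≤ n) (he : e = 1 ∨ e = -1)
    (hs1 : n + y1 + z1 = 0) (hs2 : x2 + y2 + z2 = 0)
    (hy1 : |y1| ≤ n) (hz1 : |z1| ≤ n)
    (hx2 : |x2| ≤ n) (hy2 : |y2| ≤ n) (hz2 : |z2| ≤ n)
    (hsx : |n + x2| ≤ n) (hsy : |y1 + y2| ≤ n) (hsz : |z1 + z2| ≤ n)
    (hw : n * y2 - x2 * y1 = e) :
    |n + 2 * x2| < n ∧ |y1 + 2 * y2| < n ∧ |z1 + 2 * z2| < n := by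
  rw [abs_le] at hy1 hz1 hx2 hy2 hz2 hsx hsy hsz
  have hwz : n * z2 - x2 * z1 = -e := by linear_combination n * hs2 - x2 * hs1 - hw
  -- x2 strictly between -n and 0
  have hx2u : x2 < 0 := by
    rcases (by omega : x2 < 0 ∨ x2 = 0) with h | h
    · exact h
    · exfalso; rw [h] at hw
      exact no_unit_multiple hn he (show n * y2 = e by linear_combination hw)
  have hx2l : -n < x2 := by
    rcases (by omega : -n < x2 ∨ x2 = -n) with h | h
    · exact h
    · exfalso; rw [h] at hw
      exact no_unit_multiple hn he (show n * (y2 + y1) = e by linear_combination hw)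
  refine ⟨by rw [abs_lt]; omega, ?_, ?_⟩
  · exact core_coord hn he (by omega) (by omega) (by omega) (by omega) hx2l hx2u hw
  · exact core_coord hn (by rcases he with h | h <;> omega : -e = 1 ∨ -e = -1)
      (by omega) (by omega) (by omega) (by omega) hx2l hx2u
      (by linear_combination hwz)

lemma keycase {n e X1 Y1 Z1 X2 Y2 Z2 : ℤ} (hn : 2 ≤ n) (he : e = 1 ∨ e = -1)
    (hs1 : X1 + Y1 + Z1 = 0) (hs2 : X2 + Y2 + Z2 = 0) (hX1 : X1 = n)
    (hy1 : |Y1| ≤ n) (hz1 : |Z1| ≤ n)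
    (hx2 : |X2| ≤ n) (hy2 : |Y2| ≤ n) (hz2 : |Z2| ≤ n)
    (hsx : |X1 + X2| ≤ n) (hsy : |Y1 + Y2| ≤ n) (hsz : |Z1 + Z2| ≤ n)
    (hw : X1 * Y2 - X2 * Y1 = e) :
    |X1 + 2 * X2| < n ∧ |Y1 + 2 * Y2| < n ∧ |Z1 + 2 * Z2| < n := by
  subst hX1
  exact core hn he hs1 hs2 hy1 hz1 hx2 hy2 hz2 hsx hsy hsz hw

lemma key3 {n e x1 y1 z1 x2 y2 z2 : ℤ} (hn2 : 2 ≤ n) (he : e = 1 ∨ e = -1)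
    (hs1 : x1 + y1 + z1 = 0) (hs2 : x2 + y2 + z2 = 0)
    (hw : x1 * y2 - x2 * y1 = e)
    (hn : n = max (max |x1| |y1|) |z1|)
    (hV : max (max |x2| |y2|) |z2| ≤ n)
    (hS : max (max |x1 + x2| |y1 + y2|) |z1 + z2| ≤ n) :
    max (max |x1 + 2 * x2| |y1 + 2 * y2|) |z1 + 2 * z2| < n := by
  have bx1 : |x1| ≤ n := hn ▸ (le_max_left _ _).trans (le_max_left _ _)
  have by1 : |y1| ≤ n := hn ▸ (le_max_right _ _).trans (le_max_left _ _)
  have bz1 : |z1| ≤ n := hn ▸ le_max_right _ _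
  have bx2 : |x2| ≤ n := ((le_max_left _ _).trans (le_max_left _ _)).trans hV
  have by2 : |y2| ≤ n := ((le_max_right _ _).trans (le_max_left _ _)).trans hV
  have bz2 : |z2| ≤ n := (le_max_right _ _).trans hV
  have bsx : |x1 + x2| ≤ n := ((le_max_left _ _).trans (le_max_left _ _)).trans hS
  have bsy : |y1 + y2| ≤ n := ((le_max_right _ _).trans (le_max_left _ _)).trans hS
  have bsz : |z1 + z2| ≤ n := (le_max_right _ _).trans hS
  have hwy : y1 * z2 - y2 * z1 = e := by linear_combination y1 * hs2 - y2 * hs1 + hw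
  have hwz : z1 * x2 - z2 * x1 = e := by linear_combination z1 * hs2 - z2 * hs1 + hwy
  have hattain : |x1| = n ∨ |y1| = n ∨ |z1| = n := by
    rcases max_cases (max |x1| |y1|) |z1| with ⟨h, _⟩ | ⟨h, _⟩
    · rcases max_cases |x1| |y1| with ⟨g, _⟩ | ⟨g, _⟩
      · left; omega
      · right; left; omega
    · right; right; omega
  have hfin : |x1 + 2 * x2| < n ∧ |y1 + 2 * y2| < n ∧ |z1 + 2 * z2| < n := by
    rcases hattain with h | h | h <;>
      rcases (abs_eq (by omega : (0:ℤ) ≤ n)).mp h with hs | hs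
    · exact keycase hn2 he hs1 hs2 hs by1 bz1 bx2 by2 bz2 bsx bsy bsz hw
    · -- x1 = -n : negate everything
      obtain ⟨c1, c2, c3⟩ := keycase (X1 := -x1) (Y1 := -y1) (Z1 := -z1)
        (X2 := -x2) (Y2 := -y2) (Z2 := -z2) hn2 he (by omega) (by omega) (by omega)
        (by rwa [abs_neg]) (by rwa [abs_neg]) (by rwa [abs_neg]) (by rwa [abs_neg])
        (by rwa [abs_neg])
        (by rw [show -x1 + -x2 = -(x1 + x2) by ring, abs_neg]; exact bsx)
        (by rw [show -y1 + -y2 = -(y1 + y2) by ring, abs_neg]; exact bsy)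
        (by rw [show -z1 + -z2 = -(z1 + z2) by ring, abs_neg]; exact bsz)
        (by linear_combination hw)
      rw [show -x1 + 2 * -x2 = -(x1 + 2 * x2) by ring, abs_neg] at c1
      rw [show -y1 + 2 * -y2 = -(y1 + 2 * y2) by ring, abs_neg] at c2
      rw [show -z1 + 2 * -z2 = -(z1 + 2 * z2) by ring, abs_neg] at c3
      exact ⟨c1, c2, c3⟩
    · -- y1 = n : cyclic (y,z,x)
      obtain ⟨c1, c2, c3⟩ := keycase (X1 := y1) (Y1 := z1) (Z1 := x1)
        (X2 := y2) (Y2 := z2) (Z2 := x2) hn2 he (by omega) (by omega) hs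
        bz1 bx1 by2 bz2 bx2 bsy bsz bsx hwy
      exact ⟨c3, c1, c2⟩
    · -- y1 = -n
      obtain ⟨c1, c2, c3⟩ := keycase (X1 := -y1) (Y1 := -z1) (Z1 := -x1)
        (X2 := -y2) (Y2 := -z2) (Z2 := -x2) hn2 he (by omega) (by omega) (by omega)
        (by rwa [abs_neg]) (by rwa [abs_neg]) (by rwa [abs_neg]) (by rwa [abs_neg])
        (by rwa [abs_neg])
        (by rw [show -y1 + -y2 = -(y1 + y2) by ring, abs_neg]; exact bsy)
        (by rw [show -z1 + -z2 = -(z1 + z2) by ring, abs_neg]; exact bsz)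
        (by rw [show -x1 + -x2 = -(x1 + x2) by ring, abs_neg]; exact bsx)
        (by linear_combination hwy)
      rw [show -y1 + 2 * -y2 = -(y1 + 2 * y2) by ring, abs_neg] at c1
      rw [show -z1 + 2 * -z2 = -(z1 + 2 * z2) by ring, abs_neg] at c2
      rw [show -x1 + 2 * -x2 = -(x1 + 2 * x2) by ring, abs_neg] at c3
      exact ⟨c3, c1, c2⟩
    · -- z1 = n : cyclic (z,x,y)
      obtain ⟨c1, c2, c3⟩ := keycase (X1 := z1) (Y1 := x1) (Z1 := y1)
        (X2 := z2) (Y2 := x2) (Z2 := y2) hn2 he (by omega) (by omega) hs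
        bx1 by1 bz2 bx2 by2 bsz bsx bsy hwz
      exact ⟨c2, c3, c1⟩
    · -- z1 = -n
      obtain ⟨c1, c2, c3⟩ := keycase (X1 := -z1) (Y1 := -x1) (Z1 := -y1)
        (X2 := -z2) (Y2 := -x2) (Z2 := -y2) hn2 he (by omega) (by omega) (by omega)
        (by rwa [abs_neg]) (by rwa [abs_neg]) (by rwa [abs_neg]) (by rwa [abs_neg])
        (by rwa [abs_neg])
        (by rw [show -z1 + -z2 = -(z1 + z2) by ring, abs_neg]; exact bsz)
        (by rw [show -x1 + -x2 = -(x1 + x2) by ring, abs_neg]; exact bsx)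
        (by rw [show -y1 + -y2 = -(y1 + y2) by ring, abs_neg]; exact bsy)
        (by linear_combination hwz)
      rw [show -z1 + 2 * -z2 = -(z1 + 2 * z2) by ring, abs_neg] at c1
      rw [show -x1 + 2 * -x2 = -(x1 + 2 * x2) by ring, abs_neg] at c2
      rw [show -y1 + 2 * -y2 = -(y1 + 2 * y2) by ring, abs_neg] at c3
      exact ⟨c2, c3, c1⟩
  exact max_lt (max_lt hfin.1 hfin.2.1) hfin.2.2

lemma hexm_eq_xyz (a b : ℤ) : hexm a b = max (max |a| |(-b)|) |b - a| := by
  unfold hexm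
  rw [abs_neg, abs_sub_comm a b]

/-- Key descent inequality for the hexagonal norm. -/
lemma key {a1 b1 a2 b2 : ℤ} (hdet : a1 * b2 - a2 * b1 = 1 ∨ a1 * b2 - a2 * b1 = -1)
    (h2 : hexm a2 b2 ≤ hexm a1 b1) (h12 : hexm (a1 + a2) (b1 + b2) ≤ hexm a1 b1)
    (hn : 2 ≤ hexm a1 b1) :
    hexm (a1 + 2 * a2) (b1 + 2 * b2) < hexm a1 b1 := by
  have h := key3 (n := hexm a1 b1) (e := a2 * b1 - a1 * b2)
    (x1 := a1) (y1 := -b1) (z1 := b1 - a1) (x2 := a2) (y2 := -b2) (z2 := b2 - a2)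
    hn (by rcases hdet with h | h <;> omega) (by ring) (by ring) (by ring)
    (by rw [hexm_eq_xyz a1 b1]) (by rw [← hexm_eq_xyz a2 b2]; exact h2)
    (by rw [show -b1 + -b2 = -(b1 + b2) by ring,
        show b1 - a1 + (b2 - a2) = (b1 + b2) - (a1 + a2) by ring, ← hexm_eq_xyz]
        exact h12)
  rw [show -b1 + 2 * -b2 = -(b1 + 2 * b2) by ring,
      show b1 - a1 + 2 * (b2 - a2) = (b1 + 2 * b2) - (a1 + 2 * a2) by ring,
      ← hexm_eq_xyz] at h
  exact h

lemma hexm_smul {s : ℤ} (hs : s = 1 ∨ s = -1) (a b : ℤ) : hexm (s * a) (s * b) = hexm a b := by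
  rcases hs with h | h <;> subst h
  · rw [one_mul, one_mul]
  · rw [show (-1 : ℤ) * a = -a by ring, show (-1 : ℤ) * b = -b by ring, hexm_neg]

/-- Mutating the element of maximal complexity in a non-minimal Farey triple
strictly decreases its complexity. -/
lemma descent (p q r : QInf) (hqr : q ≠ r)
    (h1 : FareyNbr p q) (h2 : FareyNbr p r) (h3 : FareyNbr q r)
    (hcq : complexity q ≤ complexity p) (hcr : complexity r ≤ complexity p)
    (hbig : 3 ≤ complexity p) :
    complexity (fareyMutEl p q r) < complexity p := by
  have hD : fnum q * fden r - fnum r * fden q = 1 ∨ fnum q * fden r - fnum r * fden q = -1 :=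
    (abs_eq (by norm_num : (0:ℤ) ≤ 1)).mp h3
  obtain ⟨hsn, hsd⟩ := fsum_rep q r hqr h3
  obtain ⟨s, hs, hdn, hdd⟩ := fdiff_rep q r h3
  have Hq := complexity_eq q
  have Hr := complexity_eq r
  have Hp := complexity_eq p
  rcases mutEl_cases p q r hqr h1 h2 h3 with ⟨hp, hm⟩ | ⟨hp, hm⟩
  · -- p = fsum q r, mutEl = fdiff q r
    have hpn : fnum p = fnum q + fnum r := by rw [hp]; exact hsn
    have hpd : fden p = fden q + fden r := by rw [hp]; exact hsd
    rw [hpn, hpd] at Hp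
    rw [hm, complexity_eq, hdn, hdd, hexm_smul hs, Hp]
    have hk := key (a1 := fnum q + fnum r) (b1 := fden q + fden r)
      (a2 := -fnum r) (b2 := -fden r)
      (by rcases hD with h | h
          · right; linear_combination -h
          · left; linear_combination -h)
      (by rw [show -fnum r = (-1 : ℤ) * fnum r by ring,
              show -fden r = (-1 : ℤ) * fden r by ring,
              hexm_smul (Or.inr rfl)]; omega)
      (by rw [show fnum q + fnum r + -fnum r = fnum q by ring,
              show fden q + fden r + -fden r = fden q by ring]; omega)
      (by omega)
    rw [show fnum q + fnum r + 2 * -fnum r = fnum q - fnum r by ring,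
        show fden q + fden r + 2 * -fden r = fden q - fden r by ring] at hk
    omega
  · -- p = fdiff q r, mutEl = fsum q r
    have hpn : fnum p = s * (fnum q - fnum r) := by rw [hp]; exact hdn
    have hpd : fden p = s * (fden q - fden r) := by rw [hp]; exact hdd
    rw [hpn, hpd, hexm_smul hs] at Hp
    rw [hm, complexity_eq, hsn, hsd, Hp]
    have hk := key (a1 := fnum q - fnum r) (b1 := fden q - fden r)
      (a2 := fnum r) (b2 := fden r)
      (by rcases hD with h | h
          · left; linear_combination h
          · right; linear_combination h)
      (by omega)
      (by rw [show fnum q - fnum r + fnum r = fnum q by ring,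
              show fden q - fden r + fden r = fden q by ring]; omega)
      (by omega)
    rw [show fnum q - fnum r + 2 * fnum r = fnum q + fnum r by ring,
        show fden q - fden r + 2 * fden r = fden q + fden r by ring] at hk
    omega

lemma complexity_nonneg (x : QInf) : 0 ≤ complexity x := by
  unfold complexity
  have := abs_nonneg (fnum x)
  have := abs_nonneg (fnum x - fden x)
  have := fden_nonneg x
  linarith

lemma qinf_zero : (0 : QInf) = ((0 : ℚ) : QInf) := rfl
lemma qinf_one : (1 : QInf) = ((1 : ℚ) : QInf) := rfl

lemma fmk_zero_one : fmk 0 1 = (0 : QInf) := by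
  unfold fmk
  rw [if_neg one_ne_zero, qinf_zero]
  norm_num

lemma fmk_one_one : fmk 1 1 = (1 : QInf) := by
  unfold fmk
  rw [if_neg one_ne_zero, qinf_one]
  norm_num

lemma base_char (x : QInf) (h : complexity x ≤ 2) : x = 0 ∨ x = 1 ∨ x = ⊤ := by
  unfold complexity at h
  have hb := fden_nonneg x
  rcases eq_or_ne (fden x) 0 with h0 | h0
  · right; right; exact fden_eq_zero x h0
  · have hx := fmk_self x
    have hbounds : fnum x = 0 ∧ fden x = 1 ∨ fnum x = 1 ∧ fden x = 1 := by
      rcases abs_cases (fnum x) with ⟨e1, f1⟩ | ⟨e1, f1⟩ <;>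
        rcases abs_cases (fnum x - fden x) with ⟨e2, f2⟩ | ⟨e2, f2⟩ <;>
        rw [e1, e2] at h <;> omega
    rcases hbounds with ⟨g1, g2⟩ | ⟨g1, g2⟩
    · left; rw [← hx, g1, g2, fmk_zero_one]
    · right; left; rw [← hx, g1, g2, fmk_one_one]

lemma base_set (p q r : QInf) (hpq : p ≠ q) (hpr : p ≠ r) (hqr : q ≠ r)
    (hp : complexity p ≤ 2) (hq : complexity q ≤ 2) (hr : complexity r ≤ 2) :
    ({p, q, r} : Set QInf) = {1, 0, ⊤} := by
  rcases base_char p hp with rfl | rfl | rfl <;>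
    rcases base_char q hq with rfl | rfl | rfl <;>
    rcases base_char r hr with rfl | rfl | rfl <;>
    first
      | exact absurd rfl hpq
      | exact absurd rfl hpr
      | exact absurd rfl hqr
      | (ext x; simp only [Set.mem_insert_iff, Set.mem_singleton_iff]; try tauto)

lemma step (p q r : QInf) (hpq : p ≠ q) (hpr : p ≠ r) (hqr : q ≠ r)
    (h1 : FareyNbr p q) (h2 : FareyNbr p r) (h3 : FareyNbr q r)
    (hcq : complexity q ≤ complexity p) (hcr : complexity r ≤ complexity p)
    (hbig : 3 ≤ complexity p) :
    ∃ p' : QInf, p' ≠ q ∧ p' ≠ r ∧ FareyNbr p' q ∧ FareyNbr p' r ∧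
      complexity p' < complexity p ∧ MutStep ({p', q, r} : Set QInf) {p, q, r} := by
  have hdes := descent p q r hqr h1 h2 h3 hcq hcr hbig
  obtain ⟨hp, hm⟩ | ⟨hp, hm⟩ := mutEl_cases p q r hqr h1 h2 h3
  · refine ⟨fareyMutEl p q r, ?_, ?_, ?_, ?_, hdes, ?_⟩
    · rw [hm]; exact fdiff_ne_left q r h3
    · rw [hm]; exact fdiff_ne_right q r h3
    · rw [hm]; exact nbr_fdiff_left q r h3
    · rw [hm]; exact nbr_fdiff_right q r h3
    · refine ⟨fareyMutEl p q r, q, r, ?_, ?_, hqr, rfl, ?_⟩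
      · rw [hm]; exact fdiff_ne_left q r h3
      · rw [hm]; exact fdiff_ne_right q r h3
      · rw [hm]
        show ({p, q, r} : Set QInf) = {fareyMutEl (fdiff q r) q r, q, r}
        rw [mutEl_fdiff q r h3, hp]
  · refine ⟨fareyMutEl p q r, ?_, ?_, ?_, ?_, hdes, ?_⟩
    · rw [hm]; exact fsum_ne_left q r hqr h3
    · rw [hm]; exact fsum_ne_right q r hqr h3
    · rw [hm]; exact nbr_fsum_left q r hqr h3
    · rw [hm]; exact nbr_fsum_right q r hqr h3
    · refine ⟨fareyMutEl p q r, q, r, ?_, ?_, hqr, rfl, ?_⟩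
      · rw [hm]; exact fsum_ne_left q r hqr h3
      · rw [hm]; exact fsum_ne_right q r hqr h3
      · rw [hm]
        show ({p, q, r} : Set QInf) = {fareyMutEl (fsum q r) q r, q, r}
        rw [mutEl_fsum q r hqr h3, hp]


theorem fareyTriple_reachable (p q r : QInf)
    (hpq : p ≠ q) (hpr : p ≠ r) (hqr : q ≠ r)
    (h1 : FareyNbr p q) (h2 : FareyNbr p r) (h3 : FareyNbr q r) :
    Relation.ReflTransGen MutStep ({1, 0, ⊤} : Set QInf) {p, q, r} := by
  suffices H : ∀ N : ℕ, ∀ p q r : QInf, p ≠ q → p ≠ r → q ≠ r →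
      FareyNbr p q → FareyNbr p r → FareyNbr q r →
      (complexity p + complexity q + complexity r).toNat ≤ N →
      Relation.ReflTransGen MutStep ({1, 0, ⊤} : Set QInf) {p, q, r} by
    exact H _ p q r hpq hpr hqr h1 h2 h3 le_rfl
  intro N
  induction N using Nat.strong_induction_on with
  | _ N IH =>
    intro p q r hpq hpr hqr h1 h2 h3 hN
    have cp0 := complexity_nonneg p
    have cq0 := complexity_nonneg q
    have cr0 := complexity_nonneg r
    by_cases hbase : complexity p ≤ 2 ∧ complexity q ≤ 2 ∧ complexity r ≤ 2
    · rw [base_set p q r hpq hpr hqr hbase.1 hbase.2.1 hbase.2.2]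
    · have hsome : (complexity q ≤ complexity p ∧ complexity r ≤ complexity p
          ∧ 3 ≤ complexity p) ∨
          (complexity p ≤ complexity q ∧ complexity r ≤ complexity q
          ∧ 3 ≤ complexity q) ∨
          (complexity p ≤ complexity r ∧ complexity q ≤ complexity r
          ∧ 3 ≤ complexity r) := by omega
      rcases hsome with ⟨ha, hb, hc⟩ | ⟨ha, hb, hc⟩ | ⟨ha, hb, hc⟩
      · obtain ⟨p', hne1, hne2, hb1, hb2, hlt, hstep⟩ :=
          step p q r hpq hpr hqr h1 h2 h3 ha hb hc
        have hc0 := complexity_nonneg p'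
        exact (IH ((complexity p' + complexity q + complexity r).toNat) (by omega)
          p' q r hne1 hne2 hqr hb1 hb2 h3 le_rfl).tail hstep
      · rw [show ({p, q, r} : Set QInf) = {q, p, r} from Set.insert_comm p q {r}]
        obtain ⟨q', hne1, hne2, hb1, hb2, hlt, hstep⟩ :=
          step q p r hpq.symm hqr hpr (fareyNbr_comm h1) h3 h2 ha hb hc
        have hc0 := complexity_nonneg q'
        exact (IH ((complexity q' + complexity p + complexity r).toNat) (by omega)
          q' p r hne1 hne2 hpr hb1 hb2 h2 le_rfl).tail hstep
      · rw [show ({p, q, r} : Set QInf) = {r, p, q} by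
          rw [show ({q, r} : Set QInf) = {r, q} from Set.pair_comm q r,
            Set.insert_comm p r {q}]]
        obtain ⟨r', hne1, hne2, hb1, hb2, hlt, hstep⟩ :=
          step r p q hpr.symm hqr.symm hpq (fareyNbr_comm h2) (fareyNbr_comm h3) h1 ha hb hc
        have hc0 := complexity_nonneg r'
        exact (IH ((complexity r' + complexity p + complexity q).toNat) (by omega)
          r' p q hne1 hne2 hpq hb1 hb2 h1 le_rfl).tail hstep
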